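/- arXiv:1901.08054 — 10 statements merged into one kernel-verified Lean document; each statement's English description precedes it below -/
import Mathlib

section
/- Let n and d be positive integers with n ≥ d, and let M be a real n×d matrix whose entries are all nonnegative, such that every column of M sums to 1 and every row of M sums to at most 1. Then there exists a doubly stochastic n×n matrix D whose first d columns coincide with M, i.e. D(i,j) = M(i,j) for every row index i and every column index j < d. -/
lemma fin_filter_lt_eq_map (n d : ℕ) (hnd : d ≤ n) :
    (Finset.univ.filter fun j : Fin n => (j : ℕ) < d) =
      Finset.univ.map (Fin.castLEEmb hnd) := by
  ext j
  simp only [Finset.mem_filter, Finset.mem_univ, true_and, Finset.mem_map]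
  constructor
  · intro h
    exact ⟨⟨j, h⟩, Fin.ext rfl⟩
  · rintro ⟨k, -, rfl⟩
    exact k.2

lemma sum_dite_lt (n d : ℕ) (hnd : d ≤ n) (g : Fin d → ℝ) (a : ℝ) :
    ∑ j : Fin n, (if h : (j : ℕ) < d then g ⟨j, h⟩ else a)
      = (∑ j, g j) + ((n : ℝ) - d) * a := by
  have hsplit : ∀ j : Fin n,
      (if h : (j : ℕ) < d then g ⟨j, h⟩ else a)
        = (if h : (j : ℕ) < d then g ⟨j, h⟩ else 0)
          + (if (j : ℕ) < d then 0 else a) := by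
    intro j
    by_cases h : (j : ℕ) < d <;> simp [h]
  rw [Finset.sum_congr rfl fun j _ => hsplit j, Finset.sum_add_distrib]
  have h1 : ∑ j : Fin n, (if h : (j : ℕ) < d then g ⟨j, h⟩ else 0) = ∑ j, g j := by
    rw [← Finset.sum_subset (Finset.subset_univ
      (Finset.univ.map (Fin.castLEEmb hnd)))]
    · rw [Finset.sum_map]
      refine Finset.sum_congr rfl fun k _ => ?_
      rw [dif_pos (show ((Fin.castLEEmb hnd k : Fin n) : ℕ) < d from k.2)]
      exact congrArg g (Fin.ext rfl)
    · intro j _ hj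
      rw [← fin_filter_lt_eq_map n d hnd] at hj
      simp only [Finset.mem_filter, Finset.mem_univ, true_and] at hj
      exact dif_neg hj
  have h2 : ∑ j : Fin n, (if (j : ℕ) < d then 0 else a) = ((n : ℝ) - d) * a := by
    rw [Finset.sum_ite, Finset.sum_const_zero, zero_add, Finset.sum_const,
      nsmul_eq_mul]
    congr 1
    have hcard : (Finset.univ.filter fun j : Fin n => (j : ℕ) < d).card = d := by
      rw [fin_filter_lt_eq_map n d hnd, Finset.card_map, Finset.card_univ,
        Fintype.card_fin]
    have := Finset.card_filter_add_card_filter_not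
      (s := (Finset.univ : Finset (Fin n))) (p := fun j : Fin n => (j : ℕ) < d)
    rw [hcard, Finset.card_univ, Fintype.card_fin] at this
    have : (Finset.univ.filter fun j : Fin n => ¬ (j : ℕ) < d).card = n - d := by
      omega
    rw [this, Nat.cast_sub hnd]
  rw [h1, h2]

/-- If `M` is an `n × d` real matrix (`n ≥ d`) with nonnegative entries whose columns all
sum to `1` and whose rows all sum to at most `1`, then `M` can be completed to a doubly
stochastic `n × n` matrix `D` whose first `d` columns are the columns of `M`. -/
theorem exists_doublyStochastic_extension (n d : ℕ) (hn : 0 < n) (hd : 0 < d) (hnd : d ≤ n)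
    (M : Matrix (Fin n) (Fin d) ℝ)
    (hpos : ∀ i j, 0 ≤ M i j)
    (hcol : ∀ j, ∑ i, M i j = 1)
    (hrow : ∀ i, ∑ j, M i j ≤ 1) :
    ∃ D : Matrix (Fin n) (Fin n) ℝ,
      (∀ i j, 0 ≤ D i j) ∧ (∀ i, ∑ j, D i j = 1) ∧ (∀ j, ∑ i, D i j = 1) ∧
      ∀ (i : Fin n) (j : Fin d), D i (Fin.castLE hnd j) = M i j := by
  classical
  set r : Fin n → ℝ := fun i => ∑ j, M i j with hr
  have hrsum : ∑ i, r i = d := by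
    simp only [hr]
    rw [Finset.sum_comm (f := fun i j => M i j)]
    simp [hcol]
  have hnd' : (0:ℝ) ≤ (n : ℝ) - d := by
    rw [sub_nonneg]; exact_mod_cast hnd
  set c : Fin n → ℝ := fun i => (1 - r i) / ((n : ℝ) - d) with hc
  have hc0 : ∀ i, 0 ≤ c i := fun i =>
    div_nonneg (by rw [sub_nonneg]; exact hrow i) hnd'
  refine ⟨fun i j => if h : (j : ℕ) < d then M i ⟨j, h⟩ else c i, ?_, ?_, ?_, ?_⟩
  · intro i j
    dsimp only
    by_cases h : (j : ℕ) < d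
    · rw [dif_pos h]; exact hpos i _
    · rw [dif_neg h]; exact hc0 i
  · intro i
    dsimp only
    rw [sum_dite_lt n d hnd (fun k => M i k) (c i)]
    by_cases hdn : d = n
    · have hzero : (n : ℝ) - d = 0 := by rw [hdn]; ring
      have hri : r i = 1 := by
        have hsum0 : ∑ k, (1 - r k) = 0 := by
          rw [Finset.sum_sub_distrib, hrsum, Finset.sum_const, Finset.card_univ,
            Fintype.card_fin, nsmul_eq_mul, mul_one, hdn, sub_self]
        have := (Finset.sum_eq_zero_iff_of_nonneg
          (fun k _ => by rw [sub_nonneg]; exact hrow k)).mp hsum0 i (Finset.mem_univ i)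
        linarith
      rw [hzero, zero_mul, add_zero]
      exact hri
    · have hne : (n : ℝ) - d ≠ 0 := by
        have : d < n := lt_of_le_of_ne hnd hdn
        have : (d : ℝ) < n := by exact_mod_cast this
        linarith
      rw [hc, mul_div_cancel₀ _ hne]
      ring
  · intro j
    dsimp only
    by_cases h : (j : ℕ) < d
    · simp only [dif_pos h]
      exact hcol ⟨j, h⟩
    · simp only [dif_neg h]
      have hdn : d < n := lt_of_le_of_lt (Nat.le_of_not_lt h) j.2
      have hne : (n : ℝ) - d ≠ 0 := by
        have : (d : ℝ) < n := by exact_mod_cast hdn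
        linarith
      rw [hc]
      rw [← Finset.sum_div, Finset.sum_sub_distrib, hrsum, Finset.sum_const,
        Finset.card_univ, Fintype.card_fin, nsmul_eq_mul, mul_one,
        div_self hne]
  · intro i j
    dsimp only
    rw [dif_pos (show ((Fin.castLE hnd j : Fin n) : ℕ) < d from j.2)]
    exact congrArg (M i) (Fin.ext rfl)
end

section
/- Let d be a positive integer, let p and q be probability vectors in ℝ^d with q(i) > 0 for every i, and let T be a doubly stochastic d×d matrix. Then Σ_j p(j)·ln p(j) ≥ Σ_i Σ_j T(i,j)·p(j)·ln q(i), where ln denotes the natural logarithm and the convention 0·ln 0 = 0 is used. -/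
/-- Classical core of Klein's inequality: for probability vectors `p`, `q` (with `q` strictly
positive) and a doubly stochastic matrix `T`,
`∑ⱼ p j * ln (p j) ≥ ∑ᵢ ∑ⱼ T i j * p j * ln (q i)`.
(Here `Real.log 0 = 0`, implementing the convention `0 · ln 0 = 0`.) -/
theorem klein_inequality_core (d : ℕ) (hd : 0 < d) (p q : Fin d → ℝ)
    (hp0 : ∀ i, 0 ≤ p i) (hp1 : ∑ i, p i = 1)
    (hq0 : ∀ i, 0 < q i) (hq1 : ∑ i, q i = 1)
    (T : Matrix (Fin d) (Fin d) ℝ)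
    (hT0 : ∀ i j, 0 ≤ T i j)
    (hTrow : ∀ i, ∑ j, T i j = 1) (hTcol : ∀ j, ∑ i, T i j = 1) :
    ∑ j, p j * Real.log (p j) ≥ ∑ i, ∑ j, T i j * p j * Real.log (q i) := by
  set r : Fin d → ℝ := fun j => ∑ i, T i j * q i with hr
  have hr0 : ∀ j, 0 < r j := by
    intro j
    apply Finset.sum_pos'
    · intro i _; exact mul_nonneg (hT0 i j) (hq0 i).le
    · obtain ⟨i, _, hi⟩ : ∃ i ∈ Finset.univ, 0 < T i j := by
        by_contra h
        push_neg at h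
        have : ∑ i, T i j = 0 :=
          Finset.sum_eq_zero fun i hi => le_antisymm (h i hi) (hT0 i j)
        rw [hTcol j] at this; norm_num at this
      exact ⟨i, Finset.mem_univ i, mul_pos hi (hq0 i)⟩
  have jensen : ∀ j, ∑ i, T i j * Real.log (q i) ≤ Real.log (r j) := by
    intro j
    have := strictConcaveOn_log_Ioi.concaveOn.le_map_sum
      (t := Finset.univ) (w := fun i => T i j) (p := q)
      (fun i _ => hT0 i j) (hTcol j) (fun i _ => Set.mem_Ioi.2 (hq0 i))
    simpa [smul_eq_mul] using this
  have step1 : ∑ i, ∑ j, T i j * p j * Real.log (q i) ≤ ∑ j, p j * Real.log (r j) := by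
    rw [Finset.sum_comm]
    apply Finset.sum_le_sum
    intro j _
    calc ∑ i, T i j * p j * Real.log (q i)
        = p j * ∑ i, T i j * Real.log (q i) := by
          rw [Finset.mul_sum]; congr 1; ext i; ring
      _ ≤ p j * Real.log (r j) :=
          mul_le_mul_of_nonneg_left (jensen j) (hp0 j)
  have hrsum : ∑ j, r j = 1 := by
    rw [hr]
    calc (∑ j, ∑ i, T i j * q i) = ∑ i, (∑ j, T i j) * q i := by
          rw [Finset.sum_comm]; congr 1; ext i; rw [Finset.sum_mul]
      _ = 1 := by simp [hTrow, hq1]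
  have step2 : ∑ j, p j * Real.log (r j) ≤ ∑ j, p j * Real.log (p j) := by
    have key : ∀ j, p j * Real.log (r j) - p j * Real.log (p j) ≤ r j - p j := by
      intro j
      rcases eq_or_lt_of_le (hp0 j) with h | h
      · simp [← h, (hr0 j).le]
      · have : Real.log (r j / p j) ≤ r j / p j - 1 :=
          Real.log_le_sub_one_of_pos (div_pos (hr0 j) h)
        rw [Real.log_div (hr0 j).ne' h.ne'] at this
        have := mul_le_mul_of_nonneg_left this h.le
        rw [mul_sub, mul_sub, mul_div_cancel₀ _ h.ne', mul_one] at this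
        linarith
    have := Finset.sum_le_sum (fun j (_ : j ∈ Finset.univ) => key j)
    rw [Finset.sum_sub_distrib, Finset.sum_sub_distrib, hrsum, hp1] at this
    linarith
  exact le_trans step1 step2
end

section
/- Let d be a positive integer, let p and q be probability vectors in ℝ^d with q(i) > 0 for every i, and let T be a doubly stochastic d×d matrix. If Σ_j p(j)·ln p(j) = Σ_i Σ_j T(i,j)·p(j)·ln q(i) (with the convention 0·ln 0 = 0), then there exists a permutation π of {1,…,d} such that p(j) = q(π(j)) for every j. -/
/-- Equality case of the classical core of Klein's inequality: for probability vectors `p`, `q`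
(with `q` strictly positive) and a doubly stochastic matrix `T`, if
`∑ⱼ p j * ln (p j) = ∑ᵢ ∑ⱼ T i j * p j * ln (q i)` then `p` is a permutation of `q`.
(Here `Real.log 0 = 0`, implementing the convention `0 · ln 0 = 0`.) -/
theorem klein_inequality_equality_case (d : ℕ) (hd : 0 < d) (p q : Fin d → ℝ)
    (hp0 : ∀ i, 0 ≤ p i) (hp1 : ∑ i, p i = 1)
    (hq0 : ∀ i, 0 < q i) (hq1 : ∑ i, q i = 1)
    (T : Matrix (Fin d) (Fin d) ℝ)
    (hT0 : ∀ i j, 0 ≤ T i j)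
    (hTrow : ∀ i, ∑ j, T i j = 1) (hTcol : ∀ j, ∑ i, T i j = 1)
    (heq : ∑ j, p j * Real.log (p j) = ∑ i, ∑ j, T i j * p j * Real.log (q i)) :
    ∃ π : Equiv.Perm (Fin d), ∀ j, p j = q (π j) := by
  classical
  set a : Fin d × Fin d → ℝ :=
    fun x => T x.1 x.2 * p x.2 * (Real.log (q x.1) - Real.log (p x.2)) with ha
  set b : Fin d × Fin d → ℝ := fun x => T x.1 x.2 * q x.1 - T x.1 x.2 * p x.2 with hb
  have hab : ∀ x : Fin d × Fin d, a x ≤ b x := by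
    rintro ⟨i, j⟩
    simp only [ha, hb]
    rcases eq_or_lt_of_le (hp0 j) with h0 | h0
    · rw [← h0]
      have := mul_nonneg (hT0 i j) (hq0 i).le
      simp; linarith
    · have hlog : Real.log (q i) - Real.log (p j) ≤ q i / p j - 1 := by
        rw [← Real.log_div (ne_of_gt (hq0 i)) (ne_of_gt h0)]
        exact Real.log_le_sub_one_of_pos (div_pos (hq0 i) h0)
      calc T i j * p j * (Real.log (q i) - Real.log (p j))
          ≤ T i j * p j * (q i / p j - 1) :=
            mul_le_mul_of_nonneg_left hlog (mul_nonneg (hT0 i j) h0.le)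
        _ = T i j * q i - T i j * p j := by field_simp
  have hsuma : ∑ x : Fin d × Fin d, a x = 0 := by
    have h1 : ∑ x : Fin d × Fin d, a x
        = (∑ i, ∑ j, T i j * p j * Real.log (q i))
          - ∑ i, ∑ j, T i j * (p j * Real.log (p j)) := by
      rw [Fintype.sum_prod_type]
      simp only [ha]
      rw [← Finset.sum_sub_distrib]
      congr 1 with i
      rw [← Finset.sum_sub_distrib]
      congr 1 with j
      ring
    have h2 : ∑ i, ∑ j, T i j * (p j * Real.log (p j)) = ∑ j, p j * Real.log (p j) := by
      rw [Finset.sum_comm]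
      congr 1 with j
      rw [← Finset.sum_mul, hTcol j, one_mul]
    rw [h1, h2, heq, sub_self]
  have hsumb : ∑ x : Fin d × Fin d, b x = 0 := by
    rw [Fintype.sum_prod_type]
    simp only [hb, Finset.sum_sub_distrib]
    have h1 : ∑ i, ∑ j, T i j * q i = 1 := by
      have : ∀ i, ∑ j, T i j * q i = q i := fun i => by
        rw [← Finset.sum_mul, hTrow i, one_mul]
      simp only [this, hq1]
    have h2 : ∑ i, ∑ j, T i j * p j = 1 := by
      rw [Finset.sum_comm]
      have : ∀ j, ∑ i, T i j * p j = p j := fun j => by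
        rw [← Finset.sum_mul, hTcol j, one_mul]
      simp only [this, hp1]
    rw [h1, h2, sub_self]
  have heach : ∀ x : Fin d × Fin d, a x = b x := by
    have := (Finset.sum_eq_sum_iff_of_le (fun x _ => hab x)).mp (hsuma.trans hsumb.symm)
    exact fun x => this x (Finset.mem_univ x)
  -- every p j is positive
  have hppos : ∀ j, 0 < p j := by
    intro j
    rcases eq_or_lt_of_le (hp0 j) with h0 | h0
    · exfalso
      have hT : ∀ i, T i j = 0 := by
        intro i
        have := heach (i, j)
        simp only [ha, hb, ← h0] at this
        have hTq : T i j * q i = 0 := by linarith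
        rcases mul_eq_zero.mp hTq with h | h
        · exact h
        · exact absurd h (ne_of_gt (hq0 i))
      have := hTcol j
      simp [hT] at this
    · exact h0
  -- key fact: T i j ≠ 0 → p j = q i
  have hkey : ∀ i j, T i j ≠ 0 → p j = q i := by
    intro i j hTij
    by_contra hne
    have hTpos : 0 < T i j := lt_of_le_of_ne (hT0 i j) (Ne.symm hTij)
    have hx : q i / p j ≠ 1 := by
      intro h
      exact hne ((div_eq_one_iff_eq (ne_of_gt (hppos j))).mp h).symm
    have hlt : Real.log (q i / p j) < q i / p j - 1 :=
      Real.log_lt_sub_one_of_pos (div_pos (hq0 i) (hppos j)) hx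
    have hlogdiv : Real.log (q i / p j) = Real.log (q i) - Real.log (p j) :=
      Real.log_div (ne_of_gt (hq0 i)) (ne_of_gt (hppos j))
    have heq' := heach (i, j)
    simp only [ha, hb] at heq'
    have h1 : p j * (Real.log (q i) - Real.log (p j)) = q i - p j := by
      have := mul_left_cancel₀ (ne_of_gt hTpos) (by linarith [heq'] : T i j * (p j * (Real.log (q i) - Real.log (p j))) = T i j * (q i - p j))
      exact this
    rw [← hlogdiv] at h1
    have h2 : p j * Real.log (q i / p j) < p j * (q i / p j - 1) :=
      mul_lt_mul_of_pos_left hlt (hppos j)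
    have h3 : p j * (q i / p j - 1) = q i - p j := by
      have hpj : p j ≠ 0 := ne_of_gt (hppos j)
      field_simp
    linarith
  -- counting: fibers of p and q have equal cardinality
  have hcard : ∀ c : ℝ,
      (Finset.univ.filter (fun j => p j = c)).card
        = (Finset.univ.filter (fun i => q i = c)).card := by
    intro c
    set A := Finset.univ.filter (fun i : Fin d => q i = c) with hA
    set B := Finset.univ.filter (fun j : Fin d => p j = c) with hB
    have hBcard : (B.card : ℝ) = ∑ j ∈ B, ∑ i ∈ A, T i j := by
      have : ∀ j ∈ B, ∑ i ∈ A, T i j = 1 := by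
        intro j hj
        rw [← hTcol j]
        apply Finset.sum_subset (Finset.subset_univ A)
        intro i _ hiA
        by_contra hne
        have hpq := hkey i j hne
        have hpj : p j = c := (Finset.mem_filter.mp hj).2
        exact hiA (Finset.mem_filter.mpr ⟨Finset.mem_univ i, by rw [← hpq, hpj]⟩)
      rw [Finset.sum_congr rfl this]
      simp
    have hAcard : (A.card : ℝ) = ∑ i ∈ A, ∑ j ∈ B, T i j := by
      have : ∀ i ∈ A, ∑ j ∈ B, T i j = 1 := by
        intro i hi
        rw [← hTrow i]
        apply Finset.sum_subset (Finset.subset_univ B)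
        intro j _ hjB
        by_contra hne
        have hpq := hkey i j hne
        have hqi : q i = c := (Finset.mem_filter.mp hi).2
        exact hjB (Finset.mem_filter.mpr ⟨Finset.mem_univ j, by rw [hpq, hqi]⟩)
      rw [Finset.sum_congr rfl this]
      simp
    have : (B.card : ℝ) = (A.card : ℝ) := by
      rw [hBcard, hAcard, Finset.sum_comm]
    exact_mod_cast this
  have hcard' : ∀ c : ℝ, Fintype.card {j // p j = c} = Fintype.card {i // q i = c} := by
    intro c
    rw [Fintype.card_subtype, Fintype.card_subtype]
    exact hcard c
  let e : ∀ c : ℝ, {j // p j = c} ≃ {i // q i = c} :=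
    fun c => Fintype.equivOfCardEq (hcard' c)
  exact ⟨Equiv.ofFiberEquiv e, fun j => (Equiv.ofFiberEquiv_map e j).symm⟩
end

section
/- Let e₀, e₁, e₂, e₃ denote the standard basis of ℂ⁴, let ρ = diag(1/2, 1/2, 0, 0) and σ = diag(1/2, 0, 1/2, 0) as 4×4 complex matrices, and let S be the 4×4 permutation matrix exchanging e₀ ↔ e₂ and e₁ ↔ e₃. Then for every pair of 2×2 unitary matrices U₀, U₁ and every k ∈ {0,1}, the unitary W = (U₀ ⊕ U₁)·S^k (with U₀ ⊕ U₁ the block-diagonal matrix with blocks U₀ and U₁) satisfies W·ρ·W* ≠ σ. -/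
open Matrix

/-- The state `ρ = diag (1/2, 1/2, 0, 0)` of a doubled qubit: a mixture of two pure states
in the even sector `H₀ = span {e₀, e₁}`. -/
noncomputable def dqtRho : Matrix (Fin 4) (Fin 4) ℂ :=
  Matrix.diagonal ![1/2, 1/2, 0, 0]

/-- The state `σ = diag (1/2, 0, 1/2, 0)` of a doubled qubit: a mixture of a pure state in
the even sector and a pure state in the odd sector `H₁ = span {e₂, e₃}`. -/
noncomputable def dqtSigma : Matrix (Fin 4) (Fin 4) ℂ :=
  Matrix.diagonal ![1/2, 0, 1/2, 0]

/-- The permutation of the standard basis of `ℂ⁴` exchanging `e₀ ↔ e₂` and `e₁ ↔ e₃`. -/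
def dqtSwapPerm : Equiv.Perm (Fin 4) := (Equiv.swap 0 2).trans (Equiv.swap 1 3)

/-- The sector-exchanging unitary `S`, i.e. the permutation matrix of `e₀ ↔ e₂`, `e₁ ↔ e₃`. -/
noncomputable def dqtS : Matrix (Fin 4) (Fin 4) ℂ :=
  Matrix.of fun i j => if i = dqtSwapPerm j then 1 else 0

/-- The block-diagonal matrix `U₀ ⊕ U₁` on `ℂ⁴ = H₀ ⊕ H₁`. -/
noncomputable def dqtBlock (U₀ U₁ : Matrix (Fin 2) (Fin 2) ℂ) : Matrix (Fin 4) (Fin 4) ℂ :=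
  Matrix.reindex finSumFinEquiv finSumFinEquiv (Matrix.fromBlocks U₀ 0 0 U₁)

lemma dqtBlock_20 (U₀ U₁ : Matrix (Fin 2) (Fin 2) ℂ) : dqtBlock U₀ U₁ 2 0 = 0 := by
  have h2 : (finSumFinEquiv.symm (2:Fin (2+2)) : Fin 2 ⊕ Fin 2) = Sum.inr 0 := by decide
  have h0 : (finSumFinEquiv.symm (0:Fin (2+2)) : Fin 2 ⊕ Fin 2) = Sum.inl 0 := by decide
  simp [dqtBlock, Matrix.reindex_apply, Matrix.submatrix_apply, h2, h0]
lemma dqtBlock_21 (U₀ U₁ : Matrix (Fin 2) (Fin 2) ℂ) : dqtBlock U₀ U₁ 2 1 = 0 := by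
  have h2 : (finSumFinEquiv.symm (2:Fin (2+2)) : Fin 2 ⊕ Fin 2) = Sum.inr 0 := by decide
  have h1 : (finSumFinEquiv.symm (1:Fin (2+2)) : Fin 2 ⊕ Fin 2) = Sum.inl 1 := by decide
  simp [dqtBlock, Matrix.reindex_apply, Matrix.submatrix_apply, h2, h1]
lemma dqtBlock_02 (U₀ U₁ : Matrix (Fin 2) (Fin 2) ℂ) : dqtBlock U₀ U₁ 0 2 = 0 := by
  have h2 : (finSumFinEquiv.symm (2:Fin (2+2)) : Fin 2 ⊕ Fin 2) = Sum.inr 0 := by decide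
  have h0 : (finSumFinEquiv.symm (0:Fin (2+2)) : Fin 2 ⊕ Fin 2) = Sum.inl 0 := by decide
  simp [dqtBlock, Matrix.reindex_apply, Matrix.submatrix_apply, h2, h0]
lemma dqtBlock_03 (U₀ U₁ : Matrix (Fin 2) (Fin 2) ℂ) : dqtBlock U₀ U₁ 0 3 = 0 := by
  have h3 : (finSumFinEquiv.symm (3:Fin (2+2)) : Fin 2 ⊕ Fin 2) = Sum.inr 1 := by decide
  have h0 : (finSumFinEquiv.symm (0:Fin (2+2)) : Fin 2 ⊕ Fin 2) = Sum.inl 0 := by decide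
  simp [dqtBlock, Matrix.reindex_apply, Matrix.submatrix_apply, h3, h0]


/-- No reversible channel of doubled quantum theory, i.e. no conjugation by a unitary of the
form `(U₀ ⊕ U₁) · Sᵏ` with `U₀, U₁ ∈ U(2)` and `k ∈ {0, 1}`, maps
`ρ = diag (1/2, 1/2, 0, 0)` to `σ = diag (1/2, 0, 1/2, 0)`. -/
theorem dqt_no_unitary_maps_rho_to_sigma
    (U₀ U₁ : Matrix (Fin 2) (Fin 2) ℂ)
    (hU₀ : U₀ ∈ Matrix.unitaryGroup (Fin 2) ℂ)
    (hU₁ : U₁ ∈ Matrix.unitaryGroup (Fin 2) ℂ)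
    (k : Fin 2) :
    (dqtBlock U₀ U₁ * dqtS ^ (k : ℕ)) * dqtRho * (dqtBlock U₀ U₁ * dqtS ^ (k : ℕ))ᴴ ≠
      dqtSigma := by
  intro h
  fin_cases k
  · have h22 := congrFun (congrFun h 2) 2
    simp only [Fin.val_zero, pow_zero, mul_one] at h22
    rw [Matrix.mul_apply] at h22
    simp only [Matrix.conjTranspose_apply, Matrix.mul_apply, Fin.sum_univ_four,
      dqtRho, dqtSigma, Matrix.diagonal_apply, dqtBlock_20, dqtBlock_21] at h22
    norm_num [Fin.ext_iff, show (![1/2, 1/2, 0, 0] : Fin 4 → ℂ) 2 = 0 from rfl, show (![1/2, 1/2, 0, 0] : Fin 4 → ℂ) 3 = 0 from rfl, show (![1/2, 0, 1/2, 0] : Fin 4 → ℂ) 2 = 1/2 from rfl] at h22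
  · have h00 := congrFun (congrFun h 0) 0
    simp only [Fin.val_one, pow_one] at h00
    rw [Matrix.mul_apply] at h00
    simp only [Matrix.conjTranspose_apply, Matrix.mul_apply, Fin.sum_univ_four,
      dqtRho, dqtSigma, dqtS, Matrix.of_apply, Matrix.diagonal_apply,
      dqtBlock_02, dqtBlock_03,
      show dqtSwapPerm 0 = 2 from by decide, show dqtSwapPerm 1 = 3 from by decide,
      show dqtSwapPerm 2 = 0 from by decide, show dqtSwapPerm 3 = 1 from by decide] at h00
    norm_num [show ((0:Fin 4) = (3:Fin 4)) ↔ False from by decide,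
      show ((1:Fin 4) = (3:Fin 4)) ↔ False from by decide, Fin.ext_iff, show (![1/2, 1/2, 0, 0] : Fin 4 → ℂ) 2 = 0 from rfl, show (![1/2, 1/2, 0, 0] : Fin 4 → ℂ) 3 = 0 from rfl] at h00
end

section
/- Let G be a compact Hausdorff second-countable topological group acting continuously on a nonempty compact Hausdorff second-countable topological space X, equipped with its Borel σ-algebra. Then there exists exactly one G-invariant Borel probability measure on X if and only if the action is transitive, i.e. for all x, y ∈ X there exists g ∈ G with g•x = y. -/
open MeasureTheory

/-- On a compact group, a Haar probability measure is right-invariant. -/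
theorem haar_prob_map_mul_right {G : Type*} [Group G] [TopologicalSpace G] [IsTopologicalGroup G]
    [CompactSpace G] [T2Space G] [MeasurableSpace G] [BorelSpace G]
    (μ : Measure G) [IsProbabilityMeasure μ] [μ.IsHaarMeasure] (h : G) :
    μ.map (· * h) = μ := by
  set μh := μ.map (· * h) with hμh
  haveI : IsProbabilityMeasure μh :=
    Measure.isProbabilityMeasure_map (measurable_mul_const h).aemeasurable
  haveI : μh.IsMulLeftInvariant := by
    constructor
    intro a
    rw [hμh, Measure.map_map (measurable_const_mul a) (measurable_mul_const h),
      show ((a * ·) ∘ (· * h)) = ((· * h) ∘ (a * ·)) by ext g; simp [mul_assoc],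
      ← Measure.map_map (measurable_mul_const h) (measurable_const_mul a),
      map_mul_left_eq_self]
  have e := Measure.isMulInvariant_eq_smul_of_compactSpace μh μ
  have hu := congrArg (fun m : Measure G => m Set.univ) e
  simp only [measure_univ, Measure.smul_apply, smul_eq_mul, ENNReal.smul_def, mul_one] at hu
  rw [e]
  ext s hs
  rw [Measure.smul_apply, ENNReal.smul_def, smul_eq_mul, ← hu, one_mul]

/-- For a compact Hausdorff second-countable group `G` acting continuously on a nonempty
compact Hausdorff second-countable space `X`, there is exactly one `G`-invariant Borel
probability measure on `X` iff the action is transitive. -/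
theorem existsUnique_invariant_probabilityMeasure_iff_transitive
    {G X : Type*} [Group G] [TopologicalSpace G] [IsTopologicalGroup G]
    [CompactSpace G] [T2Space G] [SecondCountableTopology G]
    [TopologicalSpace X] [CompactSpace X] [T2Space X] [SecondCountableTopology X]
    [Nonempty X] [MeasurableSpace X] [BorelSpace X]
    [MulAction G X] [ContinuousSMul G X] :
    (∃! ν : Measure X, IsProbabilityMeasure ν ∧
        ∀ g : G, Measure.map (fun x => g • x) ν = ν) ↔
      ∀ x y : X, ∃ g : G, g • x = y := by
  borelize G
  set μ : Measure G := Measure.haarMeasure (⊤ : TopologicalSpace.PositiveCompacts G) with hμ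
  haveI : IsProbabilityMeasure μ := by
    constructor
    have := Measure.haarMeasure_self (K₀ := (⊤ : TopologicalSpace.PositiveCompacts G))
    rwa [TopologicalSpace.PositiveCompacts.coe_top] at this
  -- measurability of the orbit maps
  have hcont : ∀ x : X, Continuous fun g : G => g • x := fun x =>
    continuous_smul.comp (continuous_id.prodMk continuous_const)
  have hom : ∀ x : X, Measurable fun g : G => g • x := fun x => (hcont x).measurable
  have hsm : ∀ h : G, Measurable fun y : X => h • y := fun h =>
    (continuous_const_smul h).measurable
  -- the candidate measures
  set m : X → Measure X := fun x => μ.map (fun g => g • x) with hm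
  have mprob : ∀ x : X, IsProbabilityMeasure (m x) := fun x =>
    Measure.isProbabilityMeasure_map (hom x).aemeasurable
  have minv : ∀ (h : G) (x : X), (m x).map (fun y => h • y) = m x := by
    intro h x
    rw [hm, Measure.map_map (hsm h) (hom x),
      show ((fun y => h • y) ∘ fun g : G => g • x) = ((fun g : G => g • x) ∘ (h * ·)) by
        ext g; simp [Function.comp, mul_smul],
      ← Measure.map_map (hom x) (measurable_const_mul h), map_mul_left_eq_self]
  have morb : ∀ (h : G) (x : X), m (h • x) = m x := by
    intro h x
    simp only [hm]
    rw [show (fun g : G => g • h • x) = ((fun g : G => g • x) ∘ (· * h)) by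
        ext g; simp [Function.comp, mul_smul],
      ← Measure.map_map (hom x) (measurable_mul_const h), haar_prob_map_mul_right]
  constructor
  · -- uniqueness → transitivity
    rintro ⟨ν, hν, huniq⟩ x y
    by_contra hxy
    push_neg at hxy
    have hx : m x = ν := huniq (m x) ⟨mprob x, fun h => minv h x⟩
    have hy : m y = ν := huniq (m y) ⟨mprob y, fun h => minv h y⟩
    -- the orbit of x
    set S : Set X := Set.range fun g : G => g • x with hS
    have hScl : IsClosed S := (isCompact_range (hcont x)).isClosed
    have hSmeas : MeasurableSet S := hScl.measurableSet
    have h1 : m x S = 1 := by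
      rw [hm, Measure.map_apply (hom x) hSmeas]
      have : (fun g : G => g • x) ⁻¹' S = Set.univ :=
        Set.eq_univ_of_forall fun g => ⟨g, rfl⟩
      rw [this, measure_univ]
    have h0 : m y S = 0 := by
      rw [hm, Measure.map_apply (hom y) hSmeas]
      have : (fun g : G => g • y) ⁻¹' S = (∅ : Set G) := by
        ext g
        simp only [Set.mem_preimage, Set.mem_empty_iff_false, iff_false, hS, Set.mem_range]
        rintro ⟨g', hg'⟩
        exact hxy (g⁻¹ * g') (by rw [mul_smul, hg', inv_smul_smul])
      rw [this, measure_empty]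
    rw [hx, hy] at *
    rw [h1] at h0
    exact one_ne_zero h0
  · -- transitivity → uniqueness
    intro htrans
    obtain ⟨x₀⟩ := ‹Nonempty X›
    refine ⟨m x₀, ⟨mprob x₀, fun h => minv h x₀⟩, ?_⟩
    rintro ν ⟨hν, hνinv⟩
    have mconst : ∀ x : X, m x = m x₀ := by
      intro x
      obtain ⟨g, hg⟩ := htrans x₀ x
      rw [← hg, morb]
    -- key computation via Fubini
    ext s hs
    have key : ∀ g : G, ν s = ∫⁻ x, s.indicator (fun _ => (1 : ENNReal)) (g • x) ∂ν := by
      intro g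
      have h1 : ν ((fun x => g • x) ⁻¹' s) = ν s := by
        conv_rhs => rw [← hνinv g]
        rw [Measure.map_apply (hsm g) hs]
      rw [← h1, ← lintegral_indicator_one ((hsm g) hs)]
      congr 1
    have hmeasF : Measurable fun p : G × X => s.indicator (fun _ => (1 : ENNReal)) (p.1 • p.2) :=
      (measurable_const.indicator hs).comp continuous_smul.measurable
    calc ν s = ∫⁻ _, ν s ∂μ := by rw [lintegral_const, measure_univ, mul_one]
      _ = ∫⁻ g, ∫⁻ x, s.indicator (fun _ => (1 : ENNReal)) (g • x) ∂ν ∂μ := by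
          exact lintegral_congr fun g => key g
      _ = ∫⁻ x, ∫⁻ g, s.indicator (fun _ => (1 : ENNReal)) (g • x) ∂μ ∂ν := by
          exact lintegral_lintegral_swap hmeasF.aemeasurable
      _ = ∫⁻ x, m x s ∂ν := by
          refine lintegral_congr fun x => ?_
          rw [hm, Measure.map_apply (hom x) hs, ← lintegral_indicator_one ((hom x) hs)]
          congr 1
      _ = ∫⁻ _, m x₀ s ∂ν := lintegral_congr fun x => by rw [mconst x]
      _ = m x₀ s := by rw [lintegral_const, measure_univ, mul_one]
end

section
/- Let G be a compact Hausdorff second-countable topological group with Haar probability measure μ_G, acting continuously on a Hausdorff topological space X equipped with its Borel σ-algebra. If x₀, x₁ ∈ X lie in different orbits, i.e. there is no g ∈ G with g•x₀ = x₁, then the pushforward of μ_G along g ↦ g•x₀ and the pushforward of μ_G along g ↦ g•x₁ are mutually singular Borel probability measures; in particular they are distinct. -/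
open MeasureTheory

/-- Points in different orbits of a continuous action of a compact Hausdorff second-countable
group `G` on a Hausdorff Borel space `X` induce mutually singular (in particular, distinct)
pushforwards of the Haar probability measure along their orbit maps. -/
theorem pushforward_haar_mutuallySingular_of_differentOrbit
    {G X : Type*} [Group G] [TopologicalSpace G] [IsTopologicalGroup G]
    [CompactSpace G] [T2Space G] [SecondCountableTopology G]
    [MeasurableSpace G] [BorelSpace G]
    (μ : Measure G) [μ.IsHaarMeasure] [IsProbabilityMeasure μ]
    [TopologicalSpace X] [T2Space X] [MeasurableSpace X] [BorelSpace X]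
    [MulAction G X] [ContinuousSMul G X] (x₀ x₁ : X)
    (hx : ¬ ∃ g : G, g • x₀ = x₁) :
    (Measure.map (fun g : G => g • x₀) μ) ⟂ₘ (Measure.map (fun g : G => g • x₁) μ) ∧
      Measure.map (fun g : G => g • x₀) μ ≠ Measure.map (fun g : G => g • x₁) μ := by
  have hc0 : Continuous (fun g : G => g • x₀) := continuous_id.smul continuous_const
  have hc1 : Continuous (fun g : G => g • x₁) := continuous_id.smul continuous_const
  set S : Set X := Set.range (fun g : G => g • x₀) with hS
  have hScompact : IsCompact S := isCompact_range hc0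
  have hSmeas : MeasurableSet S := hScompact.isClosed.measurableSet
  have h0 : Measure.map (fun g : G => g • x₀) μ Sᶜ = 0 := by
    rw [Measure.map_apply hc0.measurable hSmeas.compl]
    have : (fun g : G => g • x₀) ⁻¹' Sᶜ = ∅ := by
      ext g; simp [hS]
    simp [this]
  have h1 : Measure.map (fun g : G => g • x₁) μ S = 0 := by
    rw [Measure.map_apply hc1.measurable hSmeas]
    have : (fun g : G => g • x₁) ⁻¹' S = ∅ := by
      ext g
      simp only [Set.mem_preimage, hS, Set.mem_range, Set.mem_empty_iff_false, iff_false]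
      rintro ⟨h, hh⟩
      exact hx ⟨g⁻¹ * h, by rw [mul_smul, hh]; simp⟩
    simp [this]
  have hsing : (Measure.map (fun g : G => g • x₀) μ) ⟂ₘ
      (Measure.map (fun g : G => g • x₁) μ) := ⟨Sᶜ, hSmeas.compl, h0, by simpa using h1⟩
  refine ⟨hsing, fun heq => ?_⟩
  have hu : (Measure.map (fun g : G => g • x₀) μ) Set.univ = 1 := by
    rw [Measure.map_apply hc0.measurable MeasurableSet.univ]; simp
  have : (Measure.map (fun g : G => g • x₀) μ) Set.univ = 0 := by
    have hSc : (Measure.map (fun g : G => g • x₀) μ) S = 0 := by rw [heq]; exact h1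
    have := measure_union_le (μ := Measure.map (fun g : G => g • x₀) μ) S Sᶜ
    rw [Set.union_compl_self, hSc, h0, add_zero] at this; exact le_antisymm this bot_le
  rw [hu] at this; exact one_ne_zero this
end

section
/- Let M be a nonempty compact Hausdorff topological monoid (a monoid with jointly continuous multiplication on a compact Hausdorff space). Then the set of units of M, i.e. {x ∈ M : ∃ y ∈ M, x·y = 1 and y·x = 1}, is a closed subset of M. -/
open Topology Filter


/-- In a nonempty compact Hausdorff topological monoid, the set of (two-sided) units is
closed. -/
theorem isClosed_units_of_compact_monoid
    {M : Type*} [Monoid M] [TopologicalSpace M] [CompactSpace M] [T2Space M]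
    [Nonempty M] [ContinuousMul M] :
    IsClosed {x : M | ∃ y : M, x * y = 1 ∧ y * x = 1} := by
  classical
  refine isClosed_of_closure_subset ?_
  intro x hx
  rw [mem_closure_iff_ultrafilter] at hx
  obtain ⟨u, hu, hux⟩ := hx
  set f : M → M := fun s =>
    if h : ∃ y, s * y = 1 ∧ y * s = 1 then h.choose else 1 with hf
  have hfS : ∀ s ∈ {x : M | ∃ y : M, x * y = 1 ∧ y * x = 1},
      s * f s = 1 ∧ f s * s = 1 := by
    intro s hs
    have hs' : ∃ y, s * y = 1 ∧ y * s = 1 := hs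
    simp only [hf, dif_pos hs']
    exact hs'.choose_spec
  obtain ⟨y, -, hy⟩ := isCompact_univ.ultrafilter_le_nhds (u.map f) (by simp)
  have hfy : Filter.Tendsto f u (𝓝 y) := hy
  have hxid : Filter.Tendsto (fun s : M => s) u (𝓝 x) := hux
  refine ⟨y, ?_, ?_⟩
  · have h1 : Filter.Tendsto (fun s => s * f s) u (𝓝 (x * y)) := hxid.mul hfy
    have h2 : Filter.Tendsto (fun s => s * f s) u (𝓝 1) := by
      refine Filter.Tendsto.congr' ?_ tendsto_const_nhds
      exact (Filter.eventually_iff.2 hu).mono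
        fun s hs => ((hfS s hs).1).symm
    exact tendsto_nhds_unique h1 h2
  · have h1 : Filter.Tendsto (fun s => f s * s) u (𝓝 (y * x)) := hfy.mul hxid
    have h2 : Filter.Tendsto (fun s => f s * s) u (𝓝 1) := by
      refine Filter.Tendsto.congr' ?_ tendsto_const_nhds
      exact (Filter.eventually_iff.2 hu).mono
        fun s hs => ((hfS s hs).2).symm
    exact tendsto_nhds_unique h1 h2
end

section
/- Let V be a finite-dimensional real normed vector space, let C ⊆ V be a closed convex cone that spans V and is pointed (C ∩ (−C) = {0}), and let u : V → ℝ be a linear functional with u(x) > 0 for every nonzero x ∈ C. Let S = {x ∈ C : u(x) = 1}, and assume S is compact and contains at least two points. Then for every extreme point ψ₁ of S there exist an extreme point ψ₂ of S and a linear functional a : V → ℝ such that 0 ≤ a(x) ≤ u(x) for all x ∈ C, a(ψ₁) = 0, and a(ψ₂) = 1. -/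
/-- In an unrestricted theory, every pure state `ψ₁` is perfectly distinguishable from some
other pure state `ψ₂`: abstractly, if `C` is a spanning pointed closed convex cone in a
finite-dimensional real normed space, `u` a linear functional strictly positive on
`C \ {0}`, and `S = {x ∈ C | u x = 1}` is compact with at least two points, then for every
extreme point `ψ₁` of `S` there are an extreme point `ψ₂` of `S` and a linear functional
`a` with `0 ≤ a ≤ u` on `C`, `a ψ₁ = 0` and `a ψ₂ = 1`. -/
theorem exists_perfectly_distinguishing_effect
    {V : Type*} [NormedAddCommGroup V] [NormedSpace ℝ V] [FiniteDimensional ℝ V]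
    (C : Set V) (hCclosed : IsClosed C) (hCconv : Convex ℝ C)
    (hCcone : ∀ r : ℝ, 0 ≤ r → ∀ x ∈ C, r • x ∈ C)
    (hCspan : Submodule.span ℝ C = ⊤)
    (hCpointed : ∀ x ∈ C, -x ∈ C → x = 0)
    (u : V →ₗ[ℝ] ℝ) (hu : ∀ x ∈ C, x ≠ 0 → 0 < u x)
    (S : Set V) (hS : S = {x ∈ C | u x = 1})
    (hScompact : IsCompact S) (hStwo : ∃ x ∈ S, ∃ y ∈ S, x ≠ y)
    (ψ₁ : V) (hψ₁ : ψ₁ ∈ Set.extremePoints ℝ S) :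
    ∃ ψ₂ ∈ Set.extremePoints ℝ S, ∃ a : V →ₗ[ℝ] ℝ,
      (∀ x ∈ C, 0 ≤ a x ∧ a x ≤ u x) ∧ a ψ₁ = 0 ∧ a ψ₂ = 1 := by
  have hψ₁S : ψ₁ ∈ S := hψ₁.1
  have hSconv : Convex ℝ S := by
    rw [hS]
    intro x hx y hy a b ha hb hab
    refine ⟨hCconv hx.1 hy.1 ha hb hab, ?_⟩
    simp only [map_add, map_smul, smul_eq_mul, hx.2, hy.2, mul_one]
    exact hab
  -- the translated set and its span
  set D : Set V := (fun x => x - ψ₁) '' S with hD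
  set W : Submodule ℝ V := Submodule.span ℝ D with hW
  set T : Set W := {w : W | (w : V) + ψ₁ ∈ S} with hT
  have hTconv : Convex ℝ T := by
    intro w₁ h₁ w₂ h₂ a b ha hb hab
    show ((a • w₁ + b • w₂ : W) : V) + ψ₁ ∈ S
    have hco : ((a • w₁ + b • w₂ : W) : V) + ψ₁
        = a • ((w₁ : V) + ψ₁) + b • ((w₂ : V) + ψ₁) := by
      push_cast
      match_scalars <;> linarith
    rw [hco]
    exact hSconv h₁ h₂ ha hb hab
  have himg : W.subtype '' T = D := by
    ext v
    constructor
    · rintro ⟨w, hw, rfl⟩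
      exact ⟨(w : V) + ψ₁, hw, by simp⟩
    · rintro ⟨x, hx, rfl⟩
      exact ⟨⟨x - ψ₁, Submodule.subset_span ⟨x, hx, rfl⟩⟩,
        show x - ψ₁ + ψ₁ ∈ S by simpa using hx, rfl⟩
  have hspanT : Submodule.span ℝ T = (⊤ : Submodule ℝ W) := by
    apply Submodule.map_injective_of_injective W.injective_subtype
    rw [Submodule.map_span, Submodule.map_subtype_top, himg, ← hW]
  have h0T : (0 : W) ∈ T := by
    show ((0 : W) : V) + ψ₁ ∈ S
    simpa using hψ₁S
  have hTaff : affineSpan ℝ T = ⊤ := by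
    rw [← AffineSubspace.coe_eq_univ_iff]
    have : T = insert (0 : W) T := (Set.insert_eq_self.2 h0T).symm
    rw [this, affineSpan_insert_zero, hspanT]
    simp
  have hTint : (interior T).Nonempty := by
    rw [hTconv.interior_nonempty_iff_affineSpan_eq_top]
    exact hTaff
  -- a point of S different from ψ₁
  obtain ⟨x, hx, y, hy, hxy⟩ := hStwo
  obtain ⟨p, hp, hpne⟩ : ∃ p ∈ S, p ≠ ψ₁ := by
    by_cases h : x = ψ₁
    · exact ⟨y, hy, fun he => hxy (by rw [h, he])⟩
    · exact ⟨x, hx, h⟩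
  set t₀ : W := ⟨p - ψ₁, Submodule.subset_span ⟨p, hp, rfl⟩⟩ with ht₀
  have ht₀T : t₀ ∈ T := by
    show p - ψ₁ + ψ₁ ∈ S
    simpa using hp
  have ht₀ne : t₀ ≠ 0 := by
    intro h
    apply hpne
    have : p - ψ₁ = 0 := congrArg Subtype.val h
    rwa [sub_eq_zero] at this
  -- 0 is not in the interior of T
  have h0notint : (0 : W) ∉ interior T := by
    intro h0
    have hcont : ContinuousAt (fun r : ℝ => r • t₀) 0 :=
      (continuous_id.smul continuous_const).continuousAt
    have hval : (fun r : ℝ => r • t₀) 0 = 0 := by simp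
    have hnhds : (fun r : ℝ => r • t₀) ⁻¹' interior T ∈ nhds (0 : ℝ) := by
      apply hcont.preimage_mem_nhds
      simpa using isOpen_interior.mem_nhds h0
    obtain ⟨δ, hδpos, hδ⟩ := Metric.mem_nhds_iff.1 hnhds
    set ε : ℝ := min (δ / 2) 1 with hε
    have hεpos : 0 < ε := lt_min (by linarith) one_pos
    have hε1 : ε ≤ 1 := min_le_right _ _
    have hεδ : ε < δ := lt_of_le_of_lt (min_le_left _ _) (by linarith)
    have hmem : (-ε) • t₀ ∈ T := by
      apply interior_subset
      apply hδ
      simp only [Metric.mem_ball, dist_zero_right, Real.norm_eq_abs]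
      rw [abs_neg, abs_of_pos hεpos]
      exact hεδ
    have hmem' : ε • t₀ ∈ T := by
      have h := hTconv h0T ht₀T (by linarith : (0:ℝ) ≤ 1 - ε) hεpos.le (by ring)
      simpa using h
    have hopen : ψ₁ ∈ openSegment ℝ (((ε • t₀ : W) : V) + ψ₁) ((((-ε) • t₀ : W) : V) + ψ₁) := by
      refine ⟨1/2, 1/2, by norm_num, by norm_num, by norm_num, ?_⟩
      push_cast
      module
    have hmem'S : ((ε • t₀ : W) : V) + ψ₁ ∈ S := hmem'
    have hmemS : (((-ε) • t₀ : W) : V) + ψ₁ ∈ S := hmem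
    have h₁ := hψ₁.2 hmem'S hmemS hopen
    apply ht₀ne
    have h2 : ((ε • t₀ : W) : V) = 0 := add_eq_right.mp h₁
    have h3 : (ε • t₀ : W) = 0 := Subtype.ext h2
    rcases smul_eq_zero.1 h3 with h | h
    · exact absurd h hεpos.ne'
    · exact h
  -- supporting functional
  obtain ⟨f, hf⟩ := geometric_hahn_banach_open_point hTconv.interior isOpen_interior h0notint
  have hf0 : ∀ w ∈ interior T, f w < 0 := by
    intro w hw
    have := hf w hw
    simpa using this
  obtain ⟨z, hz⟩ := hTint
  have hzT : z ∈ T := interior_subset hz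
  have hfz : f z < 0 := hf0 z hz
  have hfT : ∀ t ∈ T, f t ≤ 0 := by
    intro t ht
    by_contra hpos
    push_neg at hpos
    have hcpos : 0 < f t - f z := by linarith
    set ε : ℝ := f t / (2 * (f t - f z)) with hεdef
    have hεpos : 0 < ε := div_pos hpos (by linarith)
    have hεhalf : ε < 1 := by
      rw [hεdef, div_lt_one (by linarith)]
      linarith
    have hmem : (1 - ε) • t + ε • z ∈ interior T :=
      hTconv.combo_self_interior_mem_interior ht hz (by linarith) hεpos (by ring)
    have hlt : f ((1 - ε) • t + ε • z) < 0 := hf0 _ hmem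
    rw [map_add, map_smul, map_smul, smul_eq_mul, smul_eq_mul] at hlt
    have hεc : ε * (f t - f z) = f t / 2 := by
      rw [hεdef]; field_simp
    nlinarith
  -- extend f to V via a projection
  obtain ⟨Q, hQ⟩ := Submodule.exists_isCompl W
  set π := W.linearProjOfIsCompl Q hQ with hπdef
  set g : V →ₗ[ℝ] ℝ := (f : W →ₗ[ℝ] ℝ).comp π with hg
  set b : V →ₗ[ℝ] ℝ := g ψ₁ • u - g with hb
  have hπw : ∀ w : W, π (w : V) = w := fun w =>
    Submodule.linearProjOfIsCompl_apply_left hQ w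
  have huS : ∀ x ∈ S, u x = 1 := by
    intro x hx
    exact (hS ▸ hx).2
  have hbform : ∀ x ∈ S, ∀ h : x - ψ₁ ∈ W, b x = -f ⟨x - ψ₁, h⟩ := by
    intro x hx h
    have hgx : g (x - ψ₁) = f ⟨x - ψ₁, h⟩ := by
      show f (π (x - ψ₁)) = f ⟨x - ψ₁, h⟩
      exact congrArg f (hπw ⟨x - ψ₁, h⟩)
    have hsub : g x - g ψ₁ = g (x - ψ₁) := (map_sub g x ψ₁).symm
    have hbx : b x = g ψ₁ * u x - g x := by
      simp [hb, LinearMap.sub_apply, LinearMap.smul_apply, smul_eq_mul]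
    rw [hbx, huS x hx]
    linarith
  have hmemW : ∀ x ∈ S, x - ψ₁ ∈ W := fun x hx => Submodule.subset_span ⟨x, hx, rfl⟩
  have hbS : ∀ x ∈ S, 0 ≤ b x := by
    intro x hx
    have h := hmemW x hx
    rw [hbform x hx h]
    have hwT : (⟨x - ψ₁, h⟩ : W) ∈ T := by
      show x - ψ₁ + ψ₁ ∈ S
      simpa using hx
    linarith [hfT _ hwT]
  have hbψ₁ : b ψ₁ = 0 := by
    have : b ψ₁ = g ψ₁ * u ψ₁ - g ψ₁ := by
      simp [hb, LinearMap.sub_apply, LinearMap.smul_apply, smul_eq_mul]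
    rw [this, huS ψ₁ hψ₁S]
    ring
  -- the point of S where b is positive
  set xz : V := (z : V) + ψ₁ with hxz
  have hxzS : xz ∈ S := hzT
  have hxzW : xz - ψ₁ ∈ W := hmemW _ hxzS
  have hbxz : 0 < b xz := by
    rw [hbform xz hxzS hxzW]
    have : (⟨xz - ψ₁, hxzW⟩ : W) = z := Subtype.ext (by simp [hxz])
    rw [this]
    linarith
  -- maximize b on S
  obtain ⟨m, hmS, hm⟩ := hScompact.exists_isMaxOn ⟨ψ₁, hψ₁S⟩
    b.continuous_of_finiteDimensional.continuousOn
  have hMpos : 0 < b m := lt_of_lt_of_le hbxz (hm hxzS)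
  -- exposed face of maximizers
  set F : Set V := {x ∈ S | ∀ y ∈ S, b y ≤ b x} with hF
  have hexp : IsExposed ℝ S F := by
    intro _
    refine ⟨LinearMap.toContinuousLinearMap b, ?_⟩
    simp only [LinearMap.coe_toContinuousLinearMap']
    rfl
  have hFne : F.Nonempty := ⟨m, hmS, fun y hy => hm hy⟩
  have hFcomp : IsCompact F := hexp.isCompact hScompact
  obtain ⟨ψ₂, hψ₂F⟩ := hFcomp.extremePoints_nonempty hFne
  have hψ₂S : ψ₂ ∈ Set.extremePoints ℝ S :=
    hexp.isExtreme.extremePoints_subset_extremePoints hψ₂F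
  have hψ₂mem : ψ₂ ∈ F := hψ₂F.1
  have hbψ₂ : b ψ₂ = b m := le_antisymm (hm hψ₂mem.1) (hψ₂mem.2 m hmS)
  -- the effect
  refine ⟨ψ₂, hψ₂S, (b m)⁻¹ • b, ?_, ?_, ?_⟩
  · intro x hxC
    rcases eq_or_ne x 0 with rfl | hne
    · simp
    · have hux : 0 < u x := hu x hxC hne
      have hsC : (u x)⁻¹ • x ∈ C := hCcone _ (inv_nonneg.2 hux.le) x hxC
      have hsS : (u x)⁻¹ • x ∈ S := by
        rw [hS]
        refine ⟨hsC, ?_⟩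
        rw [map_smul, smul_eq_mul, inv_mul_cancel₀ hux.ne']
      have h0s : 0 ≤ b ((u x)⁻¹ • x) := hbS _ hsS
      have hMs : b ((u x)⁻¹ • x) ≤ b m := hm hsS
      have hbx : b x = u x * b ((u x)⁻¹ • x) := by
        rw [map_smul, smul_eq_mul, ← mul_assoc, mul_inv_cancel₀ hux.ne', one_mul]
      have happ : ((b m)⁻¹ • b) x = (b m)⁻¹ * b x := by
        simp [LinearMap.smul_apply, smul_eq_mul]
      rw [happ]
      constructor
      · rw [hbx]
        exact mul_nonneg (inv_nonneg.2 hMpos.le) (mul_nonneg hux.le h0s)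
      · have h1 : (b m)⁻¹ * b ((u x)⁻¹ • x) ≤ 1 := by
          rw [← inv_mul_cancel₀ hMpos.ne']
          exact mul_le_mul_of_nonneg_left hMs (inv_nonneg.2 hMpos.le)
        calc (b m)⁻¹ * b x = u x * ((b m)⁻¹ * b ((u x)⁻¹ • x)) := by rw [hbx]; ring
          _ ≤ u x * 1 := mul_le_mul_of_nonneg_left h1 hux.le
          _ = u x := mul_one _
  · simp [LinearMap.smul_apply, smul_eq_mul, hbψ₁]
  · simp only [LinearMap.smul_apply, smul_eq_mul]
    rw [hbψ₂, inv_mul_cancel₀ hMpos.ne']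
end

section
/- Let C ⊆ ℝ³ be the conical hull of the three vectors (1,1,0), (1,0,1), (0,1,1) (equivalently, C = {c ∈ ℝ³ : c₀ ≤ c₁ + c₂, c₁ ≤ c₀ + c₂, c₂ ≤ c₀ + c₁}), and let Δ = {x ∈ ℝ³ : x ≥ 0, x₀ + x₁ + x₂ = 1} be the standard simplex. Then there do not exist c ∈ C with (1,1,1) − c ∈ C and p, q ∈ Δ such that c₀p₀ + c₁p₁ + c₂p₂ = 1 and c₀q₀ + c₁q₁ + c₂q₂ = 0. -/
/-- The cone of effects of the restricted trit: the conical hull of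
`(1,1,0)`, `(1,0,1)`, `(0,1,1)` in `ℝ³`. -/
def restrictedTritCone : Set (Fin 3 → ℝ) :=
  {c | ∃ a b e : ℝ, 0 ≤ a ∧ 0 ≤ b ∧ 0 ≤ e ∧
    c = a • (![1, 1, 0] : Fin 3 → ℝ) + b • (![1, 0, 1] : Fin 3 → ℝ) +
      e • (![0, 1, 1] : Fin 3 → ℝ)}

/-- The standard simplex in `ℝ³`: the state space of a (restricted) classical trit. -/
def tritSimplex : Set (Fin 3 → ℝ) :=
  {x | (∀ i, 0 ≤ x i) ∧ x 0 + x 1 + x 2 = 1}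

/-- The restricted trit has no perfectly distinguishable pair of states: there is no allowed
effect `c` (an element of the restricted effect cone whose complement `(1,1,1) − c` is also
in the cone) together with states `p`, `q` of the trit such that `c` occurs with probability
`1` on `p` and probability `0` on `q`. -/
theorem restrictedTrit_no_perfectly_distinguishable_states :
    ¬ ∃ c ∈ restrictedTritCone,
        ((![1, 1, 1] : Fin 3 → ℝ) - c) ∈ restrictedTritCone ∧
        ∃ p ∈ tritSimplex, ∃ q ∈ tritSimplex,
          c 0 * p 0 + c 1 * p 1 + c 2 * p 2 = 1 ∧
          c 0 * q 0 + c 1 * q 1 + c 2 * q 2 = 0 := by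
  rintro ⟨c, ⟨a, b, e, ha, hb, he, hc⟩, ⟨a', b', e', ha', hb', he', hc'⟩,
    p, ⟨hp, hps⟩, q, ⟨hq, hqs⟩, hp1, hq0⟩
  have h0 := congrFun hc 0
  have h1 := congrFun hc 1
  have h2 := congrFun hc 2
  have k0 := congrFun hc' 0
  have k1 := congrFun hc' 1
  have k2 := congrFun hc' 2
  simp [Pi.add_apply, Pi.smul_apply, Pi.sub_apply, smul_eq_mul] at h0 h1 h2 k0 k1 k2
  -- nonnegativity of c i and 1 - c i
  have hc0 : 0 ≤ c 0 := by linarith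
  have hc1 : 0 ≤ c 1 := by linarith
  have hc2 : 0 ≤ c 2 := by linarith
  have hd0 : 0 ≤ 1 - c 0 := by linarith
  have hd1 : 0 ≤ 1 - c 1 := by linarith
  have hd2 : 0 ≤ 1 - c 2 := by linarith
  -- each term of the zero sum is zero
  have n0 : 0 ≤ c 0 * q 0 := mul_nonneg hc0 (hq 0)
  have n1 : 0 ≤ c 1 * q 1 := mul_nonneg hc1 (hq 1)
  have n2 : 0 ≤ c 2 * q 2 := mul_nonneg hc2 (hq 2)
  have z0 : c 0 * q 0 = 0 := by linarith
  have z1 : c 1 * q 1 = 0 := by linarith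
  have z2 : c 2 * q 2 = 0 := by linarith
  have wsum : (1 - c 0) * p 0 + (1 - c 1) * p 1 + (1 - c 2) * p 2 = 0 := by
    linear_combination hps - hp1
  have m0 : 0 ≤ (1 - c 0) * p 0 := mul_nonneg hd0 (hp 0)
  have m1 : 0 ≤ (1 - c 1) * p 1 := mul_nonneg hd1 (hp 1)
  have m2 : 0 ≤ (1 - c 2) * p 2 := mul_nonneg hd2 (hp 2)
  have w0 : (1 - c 0) * p 0 = 0 := by linarith
  have w1 : (1 - c 1) * p 1 = 0 := by linarith
  have w2 : (1 - c 2) * p 2 = 0 := by linarith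
  have hpc : 0 < p 0 ∨ 0 < p 1 ∨ 0 < p 2 := by
    by_contra h
    push_neg at h
    linarith [hp 0, hp 1, hp 2, h.1, h.2.1, h.2.2]
  have hqc : 0 < q 0 ∨ 0 < q 1 ∨ 0 < q 2 := by
    by_contra h
    push_neg at h
    linarith [hq 0, hq 1, hq 2, h.1, h.2.1, h.2.2]
  have hci : c 0 = 1 ∨ c 1 = 1 ∨ c 2 = 1 := by
    rcases hpc with h | h | h
    · left; rcases mul_eq_zero.mp w0 with h' | h' <;> [linarith; linarith]
    · right; left; rcases mul_eq_zero.mp w1 with h' | h' <;> [linarith; linarith]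
    · right; right; rcases mul_eq_zero.mp w2 with h' | h' <;> [linarith; linarith]
  have hcj : c 0 = 0 ∨ c 1 = 0 ∨ c 2 = 0 := by
    rcases hqc with h | h | h
    · left; rcases mul_eq_zero.mp z0 with h' | h' <;> [linarith; linarith]
    · right; left; rcases mul_eq_zero.mp z1 with h' | h' <;> [linarith; linarith]
    · right; right; rcases mul_eq_zero.mp z2 with h' | h' <;> [linarith; linarith]
  rcases hci with h | h | h <;> rcases hcj with h' | h' | h' <;> linarith
end

section
/- Let G be a compact Hausdorff second-countable topological group with Haar probability measure μ_G, and let V be a finite-dimensional real normed vector space on which G acts so that each element g acts as a linear map and the action map G × V → V is jointly continuous. Let P ⊆ V be a nonempty compact set with g•ψ ∈ P for every g ∈ G and ψ ∈ P, and suppose G acts transitively on P (for all ψ, ψ′ ∈ P there exists g ∈ G with g•ψ = ψ′). Then: (i) the barycenter χ_ψ = ∫_G g•ψ dμ_G(g) is the same element χ of V for every ψ ∈ P; and (ii) for every ρ in the convex hull of P there exist p ∈ (0,1] and σ in the convex hull of P such that χ = p·ρ + (1−p)·σ. -/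
open MeasureTheory

/-- The convex hull of a nonempty compact set in a finite-dimensional real normed space is
compact. -/
private lemma isCompact_convexHull_fd {V : Type*} [NormedAddCommGroup V] [NormedSpace ℝ V]
    [FiniteDimensional ℝ V] {P : Set V} (hPne : P.Nonempty) (hP : IsCompact P) :
    IsCompact (convexHull ℝ P) := by
  classical
  obtain ⟨p₀, hp₀⟩ := hPne
  set n := Module.finrank ℝ V + 1 with hn
  have key : convexHull ℝ P =
      (fun wz : (Fin n → ℝ) × (Fin n → V) => ∑ i, wz.1 i • wz.2 i) ''
        (stdSimplex ℝ (Fin n) ×ˢ Set.univ.pi fun _ : Fin n => P) := by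
    apply Set.Subset.antisymm
    · intro x hx
      obtain ⟨ι, hfin, z, w, hzP, hai, hw0, hw1, hwz⟩ := eq_pos_convex_span_of_mem_convexHull hx
      have hcard : Fintype.card ι ≤ n := by
        refine hai.card_le_finrank_succ.trans ?_
        exact Nat.add_le_add_right (Submodule.finrank_le _) 1
      obtain ⟨e⟩ : Nonempty (ι ↪ Fin n) :=
        Function.Embedding.nonempty_iff_card_le.mpr (by simpa using hcard)
      set W : Fin n → ℝ := fun j => ∑ i ∈ Finset.univ.filter (fun i => e i = j), w i with hW
      set Z : Fin n → V := fun j => if h : ∃ i, e i = j then z h.choose else p₀ with hZ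
      have hZe : ∀ i, Z (e i) = z i := by
        intro i
        have h : ∃ i', e i' = e i := ⟨i, rfl⟩
        have : h.choose = i := e.injective h.choose_spec
        simp [hZ, dif_pos h, this]
      refine ⟨(W, Z), ⟨⟨?_, ?_⟩, ?_⟩, ?_⟩
      · intro j
        exact Finset.sum_nonneg fun i _ => (hw0 i).le
      · rw [← hw1]
        simp only [hW]
        exact Finset.sum_fiberwise Finset.univ (fun i => e i) w
      · intro j _
        by_cases h : ∃ i, e i = j
        · simp only [hZ, dif_pos h]
          exact hzP ⟨h.choose, rfl⟩
        · simp only [hZ, dif_neg h]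
          exact hp₀
      · simp only
        rw [← hwz]
        have : ∀ j : Fin n, W j • Z j = ∑ i ∈ Finset.univ.filter (fun i => e i = j),
            w i • z i := by
          intro j
          rw [hW]
          simp only [Finset.sum_smul]
          refine Finset.sum_congr rfl fun i hi => ?_
          have : e i = j := (Finset.mem_filter.mp hi).2
          rw [← this, hZe]
        simp_rw [this]
        exact Finset.sum_fiberwise Finset.univ (fun i => e i) (fun i => w i • z i)
    · rintro x ⟨⟨w, z⟩, ⟨hw, hz⟩, rfl⟩
      exact (convex_convexHull ℝ P).sum_mem (fun i _ => hw.1 i) hw.2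
        (fun i _ => subset_convexHull ℝ P (hz i trivial))
  rw [key]
  refine IsCompact.image ?_ ?_
  · exact (isCompact_stdSimplex _ _).prod (isCompact_univ_pi fun _ => hP)
  · exact continuous_finset_sum _ fun i _ =>
      ((continuous_apply i).comp continuous_fst).smul ((continuous_apply i).comp continuous_snd)

/-- In a causal theory where the compact group of reversible channels acts transitively on
the compact set `P` of normalised pure states, the Haar average of any pure state is one and
the same invariant state `χ`, and `χ` is internal: every state `ρ` (element of the convex
hull of `P`) appears in some convex decomposition `χ = p • ρ + (1 − p) • σ` with `p > 0`. -/
theorem unique_invariant_state_of_transitive_and_internal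
    {G V : Type*} [Group G] [TopologicalSpace G] [IsTopologicalGroup G]
    [CompactSpace G] [T2Space G] [SecondCountableTopology G]
    [MeasurableSpace G] [BorelSpace G]
    (μ : Measure G) [μ.IsHaarMeasure] [IsProbabilityMeasure μ]
    [NormedAddCommGroup V] [NormedSpace ℝ V] [FiniteDimensional ℝ V]
    [MulAction G V]
    (hlin : ∀ g : G, IsLinearMap ℝ (fun v : V => g • v))
    (hcont : Continuous fun gv : G × V => gv.1 • gv.2)
    (P : Set V) (hPne : P.Nonempty) (hPcomp : IsCompact P)
    (hPinv : ∀ g : G, ∀ ψ ∈ P, g • ψ ∈ P)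
    (htrans : ∀ ψ ∈ P, ∀ ψ' ∈ P, ∃ g : G, g • ψ = ψ') :
    (∀ ψ ∈ P, ∀ ψ' ∈ P, (∫ g, g • ψ ∂μ) = ∫ g, g • ψ' ∂μ) ∧
    (∀ ψ ∈ P, ∀ ρ ∈ convexHull ℝ P, ∃ p : ℝ, 0 < p ∧ p ≤ 1 ∧
      ∃ σ ∈ convexHull ℝ P, (∫ g, g • ψ ∂μ) = p • ρ + (1 - p) • σ) := by
  classical
  -- continuity and integrability of orbit maps
  have hc1 : ∀ x : V, Continuous fun g : G => g • x := fun x =>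
    hcont.comp (continuous_id.prodMk continuous_const)
  have hint : ∀ x : V, Integrable (fun g : G => g • x) μ := fun x =>
    (hc1 x).integrable_of_hasCompactSupport (IsClosed.isCompact (isClosed_tsupport _))
  -- right invariance of the Haar probability measure
  have hmap : ∀ g₀ : G, Measure.map (· * g₀) μ = μ := by
    intro g₀
    have hmeas : Measurable fun g : G => g * g₀ := measurable_mul_const g₀
    haveI h2 : IsProbabilityMeasure (Measure.map (· * g₀) μ) :=
      Measure.isProbabilityMeasure_map hmeas.aemeasurable
    haveI h3 : (Measure.map (· * g₀) μ).IsOpenPosMeasure := by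
      constructor
      intro U hU hUne
      rw [Measure.map_apply hmeas hU.measurableSet]
      refine (hU.preimage (continuous_mul_right g₀)).measure_ne_zero μ ?_
      obtain ⟨u, hu⟩ := hUne
      exact ⟨u * g₀⁻¹, by simpa using hu⟩
    haveI h4 : (Measure.map (· * g₀) μ).IsHaarMeasure :=
      { toIsFiniteMeasureOnCompacts := inferInstance
        toIsMulLeftInvariant := inferInstance
        toIsOpenPosMeasure := inferInstance }
    exact Measure.isHaarMeasure_eq_of_isProbabilityMeasure _ μ
  have hRI : ∀ (g₀ : G) (x : V), (∫ g, (g * g₀) • x ∂μ) = ∫ g, g • x ∂μ := by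
    intro g₀ x
    have : (∫ g, g • x ∂(Measure.map (· * g₀) μ)) = ∫ g, (g * g₀) • x ∂μ :=
      integral_map (measurable_mul_const g₀).aemeasurable (hc1 x).aestronglyMeasurable
    rw [← this, hmap]
  -- Part 1 : invariance of the barycenter
  have key1 : ∀ ψ ∈ P, ∀ ψ' ∈ P, (∫ g, g • ψ ∂μ) = ∫ g, g • ψ' ∂μ := by
    intro ψ hψ ψ' hψ'
    obtain ⟨g₀, hg₀⟩ := htrans ψ hψ ψ' hψ'
    have : (fun g : G => g • ψ') = fun g => (g * g₀) • ψ := by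
      funext g; rw [← hg₀, mul_smul]
    rw [this, hRI]
  refine ⟨key1, ?_⟩
  intro ψ hψ ρ hρ
  set K := convexHull ℝ P with hKdef
  have hKconv : Convex ℝ K := convex_convexHull ℝ P
  have hKcomp : IsCompact K := isCompact_convexHull_fd hPne hPcomp
  have hKclosed : IsClosed K := hKcomp.isClosed
  have hPK : P ⊆ K := subset_convexHull ℝ P
  have hKne : K.Nonempty := hPne.mono hPK
  set χ := ∫ g, g • ψ ∂μ with hχdef
  -- invariance of K under the group action
  have hKinv : ∀ g : G, ∀ x ∈ K, g • x ∈ K := by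
    intro g
    have h1 : Convex ℝ {x : V | g • x ∈ K} := by
      intro x hx y hy a b ha hb hab
      simp only [Set.mem_setOf_eq] at *
      rw [(hlin g).map_add, (hlin g).map_smul, (hlin g).map_smul]
      exact hKconv hx hy ha hb hab
    intro x hx
    have h2 : K ⊆ {x : V | g • x ∈ K} :=
      convexHull_min (fun p hp => show g • p ∈ K from hPK (hPinv g p hp)) h1
    exact h2 hx
  -- the barycenter is the same for every point of K
  have hχx : ∀ x ∈ K, (∫ g, g • x ∂μ) = χ := by
    have h1 : Convex ℝ {x : V | (∫ g, g • x ∂μ) = χ} := by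
      intro x hx y hy a b ha hb hab
      simp only [Set.mem_setOf_eq] at *
      have heq : (fun g : G => g • (a • x + b • y)) = fun g => a • (g • x) + b • (g • y) := by
        funext g; rw [(hlin g).map_add, (hlin g).map_smul, (hlin g).map_smul]
      have hIax : Integrable (fun g : G => a • (g • x)) μ := (hint x).smul a
      have hIby : Integrable (fun g : G => b • (g • y)) μ := (hint y).smul b
      rw [heq, integral_add hIax hIby, integral_smul, integral_smul,
        hx, hy, ← add_smul, hab, one_smul]
    intro x hx
    have h2 : K ⊆ {x : V | (∫ g, g • x ∂μ) = χ} :=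
      convexHull_min (fun p hp => key1 p hp ψ hψ) h1
    exact h2 hx
  -- an intrinsic interior point of K
  obtain ⟨z', hz'⟩ := Set.Nonempty.intrinsicInterior hKconv hKne
  rw [intrinsicInterior] at hz'
  obtain ⟨z₀, hz₀int, rfl⟩ := hz'
  obtain ⟨ε, hε, hball⟩ := Metric.mem_nhds_iff.mp (mem_interior_iff_mem_nhds.mp hz₀int)
  set z : V := (z₀ : V) with hzdef
  have hzK : z ∈ K := hball (Metric.mem_ball_self hε)
  have hzS : ∀ w : V, w ∈ affineSpan ℝ K → ‖w - z‖ < ε → w ∈ K := by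
    intro w hw h
    have : (⟨w, hw⟩ : affineSpan ℝ K) ∈ Metric.ball z₀ ε := by
      rw [Metric.mem_ball, Subtype.dist_eq, dist_eq_norm]
      exact h
    exact hball this
  -- the neighbourhood of the identity
  set U : Set G := (fun g : G => g • z) ⁻¹' Metric.ball z (ε / 3) with hUdef
  have hUopen : IsOpen U := Metric.isOpen_ball.preimage (hc1 z)
  have hUmeas : MeasurableSet U := hUopen.measurableSet
  have h1U : (1 : G) ∈ U := by
    simp [hUdef, Metric.mem_ball_self, one_smul, (by positivity : (0:ℝ) < ε / 3)]
  set q := (μ U).toReal with hqdef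
  set c := (μ Uᶜ).toReal with hcdef
  have hqpos : 0 < q :=
    ENNReal.toReal_pos (hUopen.measure_ne_zero μ ⟨1, h1U⟩) (measure_ne_top μ U)
  have hcnonneg : 0 ≤ c := ENNReal.toReal_nonneg
  have hqc : q + c = 1 := by
    rw [hqdef, hcdef, ← ENNReal.toReal_add (measure_ne_top μ U) (measure_ne_top μ Uᶜ),
      measure_add_measure_compl hUmeas, measure_univ, ENNReal.toReal_one]
  -- barycenter over U
  set bU := ⨍ g in U, g • z ∂μ with hbUdef
  have hbUK : bU ∈ K :=
    hKconv.set_average_mem hKclosed (hUopen.measure_ne_zero μ ⟨1, h1U⟩) (measure_ne_top μ U)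
      ((ae_restrict_mem hUmeas).mono fun g _ => hKinv g z hzK) (hint z).integrableOn
  have hbUnear : ‖bU - z‖ ≤ ε / 3 := by
    have : bU ∈ Metric.closedBall z (ε / 3) := by
      refine (convex_closedBall z (ε / 3)).set_average_mem Metric.isClosed_closedBall
        (hUopen.measure_ne_zero μ ⟨1, h1U⟩) (measure_ne_top μ U)
        ((ae_restrict_mem hUmeas).mono fun g hg => ?_) (hint z).integrableOn
      exact Metric.ball_subset_closedBall hg
    simpa [Metric.mem_closedBall, dist_eq_norm] using this
  have hIU : (∫ g in U, g • z ∂μ) = q • bU := by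
    rw [hbUdef, setAverage_eq, measureReal_def, ← hqdef, smul_smul, mul_inv_cancel₀ hqpos.ne', one_smul]
  -- barycenter over the complement
  obtain ⟨bc, hbcK, hIUc⟩ : ∃ bc ∈ K, (∫ g in Uᶜ, g • z ∂μ) = c • bc := by
    by_cases hUc : μ Uᶜ = 0
    · refine ⟨z, hzK, ?_⟩
      have h0 : c = 0 := by rw [hcdef, hUc, ENNReal.toReal_zero]
      rw [h0, zero_smul, Measure.restrict_eq_zero.mpr hUc, integral_zero_measure]
    · refine ⟨⨍ g in Uᶜ, g • z ∂μ, ?_, ?_⟩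
      · exact hKconv.set_average_mem hKclosed hUc (measure_ne_top μ Uᶜ)
          ((ae_restrict_mem hUmeas.compl).mono fun g _ => hKinv g z hzK) (hint z).integrableOn
      · rw [setAverage_eq, measureReal_def, ← hcdef, smul_smul, mul_inv_cancel₀, one_smul]
        exact ENNReal.toReal_ne_zero.mpr ⟨hUc, measure_ne_top μ Uᶜ⟩
  -- splitting of the barycenter
  have hsplit : χ = q • bU + c • bc := by
    rw [← hχx z hzK, ← integral_add_compl hUmeas (hint z), hIU, hIUc]
  have hχK : χ ∈ K := by
    rw [hsplit]
    exact hKconv hbUK hbcK hqpos.le hcnonneg hqc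
  -- membership in the affine span
  have hKS : K ⊆ (affineSpan ℝ K : Set V) := subset_affineSpan ℝ K
  have hχS : χ ∈ affineSpan ℝ K := hKS hχK
  have hbUS : bU ∈ affineSpan ℝ K := hKS hbUK
  have hρS : ρ ∈ affineSpan ℝ K := hKS hρ
  -- χ is in the relative interior of K, quantitatively
  have hχball : ∀ w : V, w ∈ affineSpan ℝ K → ‖w - χ‖ ≤ q * (ε / 3) → w ∈ K := by
    intro w hwS hw
    set w' : V := q⁻¹ • (w - χ) + bU with hw'def
    have hw'S : w' ∈ affineSpan ℝ K := by
      have := AffineSubspace.smul_vsub_vadd_mem (affineSpan ℝ K) q⁻¹ hwS hχS hbUS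
      simpa [vsub_eq_sub, vadd_eq_add, hw'def] using this
    have hw'K : w' ∈ K := by
      refine hzS w' hw'S ?_
      have h1 : ‖w' - z‖ ≤ ‖q⁻¹ • (w - χ)‖ + ‖bU - z‖ := by
        have : w' - z = q⁻¹ • (w - χ) + (bU - z) := by rw [hw'def]; abel
        rw [this]; exact norm_add_le _ _
      have h2 : ‖q⁻¹ • (w - χ)‖ ≤ ε / 3 := by
        rw [norm_smul, Real.norm_eq_abs, abs_of_pos (by positivity : (0:ℝ) < q⁻¹)]
        calc q⁻¹ * ‖w - χ‖ ≤ q⁻¹ * (q * (ε / 3)) := by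
              exact mul_le_mul_of_nonneg_left hw (by positivity)
          _ = ε / 3 := by field_simp
      have : ‖w' - z‖ ≤ ε / 3 + ε / 3 := le_trans h1 (add_le_add h2 hbUnear)
      linarith
    have hw_eq : w = q • w' + c • bc := by
      have h1 : q • w' = (w - χ) + q • bU := by
        rw [hw'def, smul_add, smul_smul, mul_inv_cancel₀ hqpos.ne', one_smul]
      rw [h1]
      have : (w - χ) + q • bU + c • bc = w - χ + (q • bU + c • bc) := by abel
      rw [this, ← hsplit]
      abel
    rw [hw_eq]
    exact hKconv hw'K hbcK hqpos.le hcnonneg hqc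
  -- construct the decomposition
  set δ := q * (ε / 3) with hδdef
  have hδpos : 0 < δ := by positivity
  have hden : 0 < ‖χ - ρ‖ + δ := by positivity
  set t := δ / (‖χ - ρ‖ + δ) with htdef
  have htpos : 0 < t := div_pos hδpos hden
  have ht1 : t ≤ 1 := by
    rw [htdef, div_le_one hden]
    linarith [norm_nonneg (χ - ρ)]
  have hσS : χ + t • (χ - ρ) ∈ affineSpan ℝ K := by
    have := AffineSubspace.smul_vsub_vadd_mem (affineSpan ℝ K) t hχS hρS hχS
    simpa [vsub_eq_sub, vadd_eq_add, add_comm] using this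
  have hσK : χ + t • (χ - ρ) ∈ K := by
    refine hχball _ hσS ?_
    have h1 : χ + t • (χ - ρ) - χ = t • (χ - ρ) := by abel
    rw [h1, norm_smul, Real.norm_eq_abs, abs_of_pos htpos]
    rw [htdef, div_mul_eq_mul_div, div_le_iff₀ hden]
    nlinarith [norm_nonneg (χ - ρ)]
  refine ⟨t / (1 + t), by positivity, ?_, χ + t • (χ - ρ), hσK, ?_⟩
  · rw [div_le_one (by positivity)]
    linarith
  · have h1t : (1 : ℝ) + t ≠ 0 := by positivity
    have h2 : (1 : ℝ) - t / (1 + t) = 1 / (1 + t) := by field_simp; ring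
    rw [h2]
    match_scalars <;> field_simp <;> ring
end
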